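/- In a tangent category with negatives, for a vertical connection K on a differential bundle 𝗊, vector fields w₁, w₂ on M and a section s of q, the curvature tensor is given by the standard expression: R_K(w₁, w₂, s) = ∇_K(w₁, ∇_K(w₂, s)) − ∇_K(w₂, ∇_K(w₁, s)) − ∇_K([w₁, w₂], s). -/

import Mathlib

open CategoryTheory CategoryTheory.Limits

open scoped Classical

universe v u

variable {C : Type u} [Category.{v} C]

/-- Chosen pullback: explicit pullback data for a cospan `f : A ⟶ Z ⟵ B : g`. -/
structure ChosenPB {A B Z : C} (f : A ⟶ Z) (g : B ⟶ Z) where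
  P : C
  pr0 : P ⟶ A
  pr1 : P ⟶ B
  comm : pr0 ≫ f = pr1 ≫ g
  pair : ∀ {X : C} (u : X ⟶ A) (v : X ⟶ B), u ≫ f = v ≫ g → (X ⟶ P)
  pair_pr0 : ∀ {X : C} (u : X ⟶ A) (v : X ⟶ B) (h : u ≫ f = v ≫ g),
    pair u v h ≫ pr0 = u
  pair_pr1 : ∀ {X : C} (u : X ⟶ A) (v : X ⟶ B) (h : u ≫ f = v ≫ g),
    pair u v h ≫ pr1 = v
  hom_ext : ∀ {X : C} (w w' : X ⟶ P),
    w ≫ pr0 = w' ≫ pr0 → w ≫ pr1 = w' ≫ pr1 → w = w'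

/-- Witness that the endofunctor `T` preserves the chosen pullback `PB`. -/
structure PBLift (T : C ⥤ C) {A B Z : C} {f : A ⟶ Z} {g : B ⟶ Z} (PB : ChosenPB f g) where
  pair : ∀ {X : C} (u : X ⟶ T.obj A) (v : X ⟶ T.obj B),
    u ≫ T.map f = v ≫ T.map g → (X ⟶ T.obj PB.P)
  pair_pr0 : ∀ {X : C} (u : X ⟶ T.obj A) (v : X ⟶ T.obj B)
    (h : u ≫ T.map f = v ≫ T.map g), pair u v h ≫ T.map PB.pr0 = u
  pair_pr1 : ∀ {X : C} (u : X ⟶ T.obj A) (v : X ⟶ T.obj B)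
    (h : u ≫ T.map f = v ≫ T.map g), pair u v h ≫ T.map PB.pr1 = v
  hom_ext : ∀ {X : C} (w w' : X ⟶ T.obj PB.P),
    w ≫ T.map PB.pr0 = w' ≫ T.map PB.pr0 → w ≫ T.map PB.pr1 = w' ≫ T.map PB.pr1 → w = w'

/-- The image of a preserved chosen pullback is again a chosen pullback. -/
def PBLift.toChosenPB {T : C ⥤ C} {A B Z : C} {f : A ⟶ Z} {g : B ⟶ Z} {PB : ChosenPB f g}
    (L : PBLift T PB) : ChosenPB (T.map f) (T.map g) where
  P := T.obj PB.P
  pr0 := T.map PB.pr0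
  pr1 := T.map PB.pr1
  comm := by rw [← T.map_comp, ← T.map_comp, PB.comm]
  pair := L.pair
  pair_pr0 := L.pair_pr0
  pair_pr1 := L.pair_pr1
  hom_ext := L.hom_ext

/-- Iterated endofunctor `Tⁿ`. -/
def fpow (T : C ⥤ C) : ℕ → C ⥤ C
  | 0 => 𝟭 C
  | n + 1 => fpow T n ⋙ T

/-- A tangent category in the sense of Cockett–Cruttwell, presented with chosen
pullbacks `T₂M` of `p_M` along itself (preserved by each `Tⁿ`), addition `+`,
projection `p`, zero `0`, vertical lift `ℓ` and canonical flip `c`, together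
with the universality of the vertical lift. Sums, associativity etc. are
expressed in generalized-element form via the chosen pullback pairings. -/
structure TangentCat (C : Type u) [Category.{v} C] where
  T : C ⥤ C
  p : T ⟶ 𝟭 C
  zero : 𝟭 C ⟶ T
  l : T ⟶ T ⋙ T
  c : T ⋙ T ⟶ T ⋙ T
  T2 : ∀ M : C, ChosenPB (p.app M) (p.app M)
  T2T : ∀ M : C, PBLift T (T2 M)
  T2Tn : ∀ (M : C) (n : ℕ), PBLift (fpow T n) (T2 M)
  add : ∀ M : C, (T2 M).P ⟶ T.obj M
  add_nat : ∀ {M N : C} (f : M ⟶ N) {X : C} (u v : X ⟶ T.obj M)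
    (h : u ≫ p.app M = v ≫ p.app M)
    (h' : (u ≫ T.map f) ≫ p.app N = (v ≫ T.map f) ≫ p.app N),
    (T2 M).pair u v h ≫ add M ≫ T.map f
      = (T2 N).pair (u ≫ T.map f) (v ≫ T.map f) h' ≫ add N
  zero_p : ∀ M : C, zero.app M ≫ p.app M = 𝟙 M
  add_p : ∀ M : C, add M ≫ p.app M = (T2 M).pr0 ≫ p.app M
  add_comm' : ∀ (M : C) {X : C} (f g : X ⟶ T.obj M) (h : f ≫ p.app M = g ≫ p.app M),
    (T2 M).pair f g h ≫ add M = (T2 M).pair g f h.symm ≫ add M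
  add_assoc' : ∀ (M : C) {X : C} (f g k : X ⟶ T.obj M)
    (h1 : f ≫ p.app M = g ≫ p.app M) (h2 : g ≫ p.app M = k ≫ p.app M)
    (h3 : ((T2 M).pair f g h1 ≫ add M) ≫ p.app M = k ≫ p.app M)
    (h4 : f ≫ p.app M = ((T2 M).pair g k h2 ≫ add M) ≫ p.app M),
    (T2 M).pair ((T2 M).pair f g h1 ≫ add M) k h3 ≫ add M
      = (T2 M).pair f ((T2 M).pair g k h2 ≫ add M) h4 ≫ add M
  add_zero' : ∀ (M : C) {X : C} (f : X ⟶ T.obj M)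
    (h : f ≫ p.app M = (f ≫ p.app M ≫ zero.app M) ≫ p.app M),
    (T2 M).pair f (f ≫ p.app M ≫ zero.app M) h ≫ add M = f
  l_Tp : ∀ M : C, l.app M ≫ T.map (p.app M) = p.app M ≫ zero.app M
  l_zero : ∀ M : C, zero.app M ≫ l.app M = zero.app M ≫ T.map (zero.app M)
  l_add : ∀ (M : C) {X : C} (f g : X ⟶ T.obj M) (h : f ≫ p.app M = g ≫ p.app M),
    ∃ w : X ⟶ T.obj (T2 M).P,
      w ≫ T.map (T2 M).pr0 = f ≫ l.app M ∧ w ≫ T.map (T2 M).pr1 = g ≫ l.app M ∧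
      (T2 M).pair f g h ≫ add M ≫ l.app M = w ≫ T.map (add M)
  c_p : ∀ M : C, c.app M ≫ p.app (T.obj M) = T.map (p.app M)
  c_zero : ∀ M : C, T.map (zero.app M) ≫ c.app M = zero.app (T.obj M)
  c_add : ∀ (M : C) {X : C} (u v : X ⟶ T.obj (T.obj M))
    (h : u ≫ T.map (p.app M) = v ≫ T.map (p.app M))
    (h' : (u ≫ c.app M) ≫ p.app (T.obj M) = (v ≫ c.app M) ≫ p.app (T.obj M)),
    ∃ w : X ⟶ T.obj (T2 M).P,
      w ≫ T.map (T2 M).pr0 = u ∧ w ≫ T.map (T2 M).pr1 = v ∧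
      w ≫ T.map (add M) ≫ c.app M
        = (T2 (T.obj M)).pair (u ≫ c.app M) (v ≫ c.app M) h' ≫ add (T.obj M)
  l_c : ∀ M : C, l.app M ≫ c.app M = l.app M
  c_c : ∀ M : C, c.app M ≫ c.app M = 𝟙 (T.obj (T.obj M))
  l_l : ∀ M : C, l.app M ≫ T.map (l.app M) = l.app M ≫ l.app (T.obj M)
  c_T_c : ∀ M : C, c.app (T.obj M) ≫ T.map (c.app M) ≫ c.app (T.obj M)
    = T.map (c.app M) ≫ c.app (T.obj M) ≫ T.map (c.app M)
  l_T_c : ∀ M : C, l.app (T.obj M) ≫ T.map (c.app M) ≫ c.app (T.obj M)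
    = c.app M ≫ T.map (l.app M)
  vmu : ∀ M : C, (T2 M).P ⟶ T.obj (T.obj M)
  vmu_spec : ∀ M : C, ∃ w : (T2 M).P ⟶ T.obj (T2 M).P,
    w ≫ T.map (T2 M).pr0 = (T2 M).pr0 ≫ l.app M ∧
    w ≫ T.map (T2 M).pr1 = (T2 M).pr1 ≫ zero.app (T.obj M) ∧
    vmu M = w ≫ T.map (add M)
  vlift : ∀ {X M : C} (f : X ⟶ T.obj (T.obj M)),
    f ≫ T.map (p.app M) = f ≫ T.map (p.app M) ≫ p.app M ≫ zero.app M → (X ⟶ (T2 M).P)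
  vlift_vmu : ∀ {X M : C} (f : X ⟶ T.obj (T.obj M))
    (h : f ≫ T.map (p.app M) = f ≫ T.map (p.app M) ≫ p.app M ≫ zero.app M),
    vlift f h ≫ vmu M = f
  vmu_mono : ∀ {X M : C} (w w' : X ⟶ (T2 M).P), w ≫ vmu M = w' ≫ vmu M → w = w'

/-- Negatives: each tangent bundle is a commutative group bundle. -/
structure HasNegatives {C : Type u} [Category.{v} C] (D : TangentCat C) where
  neg : ∀ M : C, D.T.obj M ⟶ D.T.obj M
  neg_p : ∀ M : C, neg M ≫ D.p.app M = D.p.app M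
  neg_add : ∀ (M : C) {X : C} (f : X ⟶ D.T.obj M)
    (h : f ≫ D.p.app M = (f ≫ neg M) ≫ D.p.app M),
    (D.T2 M).pair f (f ≫ neg M) h ≫ D.add M = f ≫ D.p.app M ≫ D.zero.app M

/-- Fibrewise sum of two maps into a tangent bundle (defined when the maps
agree under `p`; otherwise a default value). -/
noncomputable def TangentCat.hadd (D : TangentCat C) {X M : C}
    (f g : X ⟶ D.T.obj M) : X ⟶ D.T.obj M :=
  if h : f ≫ D.p.app M = g ≫ D.p.app M then (D.T2 M).pair f g h ≫ D.add M else f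

/-- Fibrewise difference `f - g` of two maps into a tangent bundle. -/
noncomputable def TangentCat.sub (D : TangentCat C) (N : HasNegatives D) {X M : C}
    (f g : X ⟶ D.T.obj M) : X ⟶ D.T.obj M :=
  D.hadd f (g ≫ N.neg M)

/-- The bracketing operation `{f}` for the tangent bundle, obtained from the
universality (equalizer property) of the vertical lift. -/
noncomputable def TangentCat.brkT (D : TangentCat C) {X M : C}
    (f : X ⟶ D.T.obj (D.T.obj M)) : X ⟶ D.T.obj M :=
  if h : f ≫ D.T.map (D.p.app M) = f ≫ D.T.map (D.p.app M) ≫ D.p.app M ≫ D.zero.app M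
  then D.vlift f h ≫ (D.T2 M).pr0 else f ≫ D.p.app (D.T.obj M)

/-- The Lie bracket of vector fields: `[w₁,w₂] = {w₁T(w₂) − w₂T(w₁)c}`. -/
noncomputable def TangentCat.lie (D : TangentCat C) (N : HasNegatives D) {M : C}
    (w1 w2 : M ⟶ D.T.obj M) : M ⟶ D.T.obj M :=
  D.brkT (D.sub N (w1 ≫ D.T.map w2) (w2 ≫ D.T.map w1 ≫ D.c.app M))

/-- A differential bundle `𝗊 = (q, +_q, 0_q, λ)` on `E` over `M` in the tangent
category `D`, with chosen pullbacks `E₂` (of `q` along itself) and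
`T(M) ×_M E` (of `p_M` along `q`), both preserved by each `Tⁿ`, together with
the lift axioms and the universality of the lift (in equalizer form). -/
structure DiffBundle {C : Type u} [Category.{v} C] (D : TangentCat C) (E M : C) where
  q : E ⟶ M
  E2 : ChosenPB q q
  TE2 : PBLift D.T E2
  TE2n : ∀ n : ℕ, PBLift (fpow D.T n) E2
  P : ChosenPB (D.p.app M) q
  TP : PBLift D.T P
  TPn : ∀ n : ℕ, PBLift (fpow D.T n) P
  addq : E2.P ⟶ E
  zeroq : M ⟶ E
  lam : E ⟶ D.T.obj E
  addq_q : addq ≫ q = E2.pr0 ≫ q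
  zeroq_q : zeroq ≫ q = 𝟙 M
  addq_comm : ∀ {X : C} (f g : X ⟶ E) (h : f ≫ q = g ≫ q),
    E2.pair f g h ≫ addq = E2.pair g f h.symm ≫ addq
  addq_assoc : ∀ {X : C} (f g k : X ⟶ E)
    (h1 : f ≫ q = g ≫ q) (h2 : g ≫ q = k ≫ q)
    (h3 : (E2.pair f g h1 ≫ addq) ≫ q = k ≫ q)
    (h4 : f ≫ q = (E2.pair g k h2 ≫ addq) ≫ q),
    E2.pair (E2.pair f g h1 ≫ addq) k h3 ≫ addq
      = E2.pair f (E2.pair g k h2 ≫ addq) h4 ≫ addq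
  addq_zero : ∀ {X : C} (f : X ⟶ E) (h : f ≫ q = (f ≫ q ≫ zeroq) ≫ q),
    E2.pair f (f ≫ q ≫ zeroq) h ≫ addq = f
  lam_Tq : lam ≫ D.T.map q = q ≫ D.zero.app M
  lam_zero1 : zeroq ≫ lam = D.zero.app M ≫ D.T.map zeroq
  lam_add1 : ∀ {X : C} (f g : X ⟶ E) (h : f ≫ q = g ≫ q),
    ∃ w : X ⟶ D.T.obj E2.P,
      w ≫ D.T.map E2.pr0 = f ≫ lam ∧ w ≫ D.T.map E2.pr1 = g ≫ lam ∧
      E2.pair f g h ≫ addq ≫ lam = w ≫ D.T.map addq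
  lam_p : lam ≫ D.p.app E = q ≫ zeroq
  lam_zero2 : zeroq ≫ lam = zeroq ≫ D.zero.app E
  lam_add2 : ∀ {X : C} (f g : X ⟶ E) (h : f ≫ q = g ≫ q)
    (h' : (f ≫ lam) ≫ D.p.app E = (g ≫ lam) ≫ D.p.app E),
    E2.pair f g h ≫ addq ≫ lam = (D.T2 E).pair (f ≫ lam) (g ≫ lam) h' ≫ D.add E
  lam_l : lam ≫ D.l.app E = lam ≫ D.T.map lam
  mu : E2.P ⟶ D.T.obj E
  mu_spec : ∃ w : E2.P ⟶ D.T.obj E2.P,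
    w ≫ D.T.map E2.pr0 = E2.pr0 ≫ lam ∧
    w ≫ D.T.map E2.pr1 = E2.pr1 ≫ D.zero.app E ∧
    mu = w ≫ D.T.map addq
  muLift : ∀ {X : C} (f : X ⟶ D.T.obj E),
    f ≫ D.T.map q = f ≫ D.p.app E ≫ q ≫ D.zero.app M → (X ⟶ E2.P)
  muLift_mu : ∀ {X : C} (f : X ⟶ D.T.obj E)
    (h : f ≫ D.T.map q = f ≫ D.p.app E ≫ q ≫ D.zero.app M),
    muLift f h ≫ mu = f
  muLift_q : ∀ {X : C} (f : X ⟶ D.T.obj E)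
    (h : f ≫ D.T.map q = f ≫ D.p.app E ≫ q ≫ D.zero.app M),
    muLift f h ≫ E2.pr0 ≫ q = f ≫ D.p.app E ≫ q
  mu_mono : ∀ {X : C} (w w' : X ⟶ E2.P), w ≫ mu = w' ≫ mu → w = w'

/-- The bracketing operation `{f}` for a differential bundle. -/
noncomputable def DiffBundle.brk {D : TangentCat C} {E M : C} (B : DiffBundle D E M)
    {X : C} (f : X ⟶ D.T.obj E) : X ⟶ E :=
  if h : f ≫ D.T.map B.q = f ≫ D.p.app E ≫ B.q ≫ D.zero.app M
  then B.muLift f h ≫ B.E2.pr0 else f ≫ D.p.app E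

/-- Negatives for a differential bundle (the fibrewise group structure). -/
structure BundleNegatives {D : TangentCat C} {E M : C} (B : DiffBundle D E M) where
  neg : E ⟶ E
  neg_q : neg ≫ B.q = B.q
  neg_add : ∀ {X : C} (f : X ⟶ E) (h : f ≫ B.q = (f ≫ neg) ≫ B.q),
    B.E2.pair f (f ≫ neg) h ≫ B.addq = f ≫ B.q ≫ B.zeroq

/-- Fibrewise sum of maps into `E` for the bundle addition `+_q`. -/
noncomputable def DiffBundle.qadd {D : TangentCat C} {E M : C} (B : DiffBundle D E M)
    {X : C} (f g : X ⟶ E) : X ⟶ E :=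
  if h : f ≫ B.q = g ≫ B.q then B.E2.pair f g h ≫ B.addq else f

/-- Fibrewise difference of maps into `E` for the bundle addition `+_q`. -/
noncomputable def DiffBundle.qsub {D : TangentCat C} {E M : C} (B : DiffBundle D E M)
    (NB : BundleNegatives B) {X : C} (f g : X ⟶ E) : X ⟶ E :=
  B.qadd f (g ≫ NB.neg)

/-- The horizontal descent `U = ⟨T(q), p⟩ : T(E) ⟶ T(M) ×_M E`. -/
def TangentCat.hdesc (D : TangentCat C) {E M : C} (q : E ⟶ M)
    (P : ChosenPB (D.p.app M) q) : D.T.obj E ⟶ P.P :=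
  P.pair (D.T.map q) (D.p.app E) (by simpa using D.p.naturality q)

/-- A vertical connection on the differential bundle with projection `q` and
lift `lam`: a retraction `K` of `lam` with `Kq = pq`, `Kλ = ℓT(K)` and
`Kλ = T(λ)cT(K)` (equivalently, `(K,p)` and `(K,q)` are linear bundle
morphisms). -/
def IsVerticalConnection (D : TangentCat C) {E M : C} (q : E ⟶ M)
    (lam : E ⟶ D.T.obj E) (K : D.T.obj E ⟶ E) : Prop :=
  lam ≫ K = 𝟙 E ∧
  K ≫ q = D.p.app E ≫ q ∧
  K ≫ lam = D.l.app E ≫ D.T.map K ∧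
  K ≫ lam = D.T.map lam ≫ D.c.app E ≫ D.T.map K

/-- Flatness of a vertical connection: `cT(K)K = T(K)K`. -/
def IsFlat (D : TangentCat C) {E : C} (K : D.T.obj E ⟶ E) : Prop :=
  D.c.app E ≫ D.T.map K ≫ K = D.T.map K ≫ K

/-- A horizontal connection on the differential bundle with projection `q`,
lift `lam` and horizontal pullback `P = T(M) ×_M E`: a section `H` of the
horizontal descent `U = ⟨T(q),p⟩` with `Hℓ = (ℓ×0)T(H)` and
`HT(λ)c = (0×λ)T(H)` (equivalently, `(H,1)` is linear into `p_E` and into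
`T(𝗊)`). -/
def IsHorizontalConnection (D : TangentCat C) {E M : C} (q : E ⟶ M)
    (lam : E ⟶ D.T.obj E) (P : ChosenPB (D.p.app M) q)
    (H : P.P ⟶ D.T.obj E) : Prop :=
  H ≫ D.T.map q = P.pr0 ∧
  H ≫ D.p.app E = P.pr1 ∧
  (∃ w : P.P ⟶ D.T.obj P.P,
    w ≫ D.T.map P.pr0 = P.pr0 ≫ D.l.app M ∧
    w ≫ D.T.map P.pr1 = P.pr1 ≫ D.zero.app E ∧
    H ≫ D.l.app E = w ≫ D.T.map H) ∧
  (∃ w : P.P ⟶ D.T.obj P.P,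
    w ≫ D.T.map P.pr0 = P.pr0 ≫ D.zero.app (D.T.obj M) ∧
    w ≫ D.T.map P.pr1 = P.pr1 ≫ lam ∧
    H ≫ D.T.map lam ≫ D.c.app E = w ≫ D.T.map H)

/-- A (full) connection, in unbundled form: a vertical connection `K` and a
horizontal connection `H` with `HK = π₁q0_q` and `⟨K,p⟩μ + UH = 1`. -/
noncomputable def IsConnectionPair (D : TangentCat C) {E M : C} (q : E ⟶ M)
    (lam : E ⟶ D.T.obj E) (EP : ChosenPB q q) (zeroq : M ⟶ E)
    (mu : EP.P ⟶ D.T.obj E) (P : ChosenPB (D.p.app M) q)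
    (K : D.T.obj E ⟶ E) (H : P.P ⟶ D.T.obj E) : Prop :=
  IsVerticalConnection D q lam K ∧
  IsHorizontalConnection D q lam P H ∧
  H ≫ K = P.pr1 ≫ q ≫ zeroq ∧
  ∃ R : D.T.obj E ⟶ EP.P, R ≫ EP.pr0 = K ∧ R ≫ EP.pr1 = D.p.app E ∧
    D.hadd (R ≫ mu) (D.hdesc q P ≫ H) = 𝟙 (D.T.obj E)

/-- A connection on a differential bundle. -/
noncomputable def IsConnection {D : TangentCat C} {E M : C} (B : DiffBundle D E M)
    (K : D.T.obj E ⟶ E) (H : B.P.P ⟶ D.T.obj E) : Prop :=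
  IsConnectionPair D B.q B.lam B.E2 B.zeroq B.mu B.P K H

/-- A Finsler connection on a differential bundle. -/
def IsFinslerConnection {D : TangentCat C} {E M : C} (B : DiffBundle D E M)
    (R : D.T.obj E ⟶ B.E2.P) : Prop :=
  B.mu ≫ R = 𝟙 B.E2.P ∧
  R ≫ B.E2.pr1 = D.p.app E ∧
  R ≫ B.E2.pr0 ≫ B.lam = D.T.map B.lam ≫ D.c.app E ≫ D.T.map (R ≫ B.E2.pr0) ∧
  D.l.app E ≫ D.T.map (R ≫ B.E2.pr0) = R ≫ B.E2.pr0 ≫ B.lam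

/-- The covariant derivative `∇_K(w,s) = wT(s)K`. -/
def nabla (D : TangentCat C) {E M : C} (K : D.T.obj E ⟶ E)
    (w : M ⟶ D.T.obj M) (s : M ⟶ E) : M ⟶ E :=
  w ≫ D.T.map s ≫ K


section CurvatureHelpers

lemma ChosenPB.pair_congr {A B Z : C} {f : A ⟶ Z} {g : B ⟶ Z} (PB : ChosenPB f g)
    {X : C} {u u' : X ⟶ A} {v v' : X ⟶ B} (hu : u = u') (hv : v = v')
    (h : u ≫ f = v ≫ g) (h' : u' ≫ f = v' ≫ g) :
    PB.pair u v h = PB.pair u' v' h' := by subst hu; subst hv; rfl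

lemma ChosenPB.pair_uniq {A B Z : C} {f : A ⟶ Z} {g : B ⟶ Z} (PB : ChosenPB f g)
    {X : C} {u : X ⟶ A} {v : X ⟶ B} (h : u ≫ f = v ≫ g) (m : X ⟶ PB.P)
    (h0 : m ≫ PB.pr0 = u) (h1 : m ≫ PB.pr1 = v) : m = PB.pair u v h :=
  PB.hom_ext _ _ (by rw [h0, PB.pair_pr0]) (by rw [h1, PB.pair_pr1])

lemma ChosenPB.pre_pair {A B Z : C} {f : A ⟶ Z} {g : B ⟶ Z} (PB : ChosenPB f g)
    {X Y : C} (e : Y ⟶ X) (u : X ⟶ A) (v : X ⟶ B) (h : u ≫ f = v ≫ g) :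
    e ≫ PB.pair u v h
      = PB.pair (e ≫ u) (e ≫ v) (by rw [Category.assoc, Category.assoc, h]) :=
  PB.pair_uniq _ _ (by rw [Category.assoc, PB.pair_pr0])
    (by rw [Category.assoc, PB.pair_pr1])

lemma ChosenPB.pair_id {A Z : C} {f : A ⟶ Z} {g : A ⟶ Z} (PB : ChosenPB f g) :
    PB.pair PB.pr0 PB.pr1 PB.comm = 𝟙 PB.P :=
  (PB.pair_uniq PB.comm (𝟙 PB.P) (Category.id_comp _) (Category.id_comp _)).symm

/-- A commutative group bundle presented with a chosen pullback. -/
structure GB (C : Type u) [Category.{v} C] where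
  Et : C
  Mb : C
  q : Et ⟶ Mb
  PB : ChosenPB q q
  add : PB.P ⟶ Et
  zero : Mb ⟶ Et
  neg : Et ⟶ Et
  add_q : add ≫ q = PB.pr0 ≫ q
  zero_q : zero ≫ q = 𝟙 Mb
  comm : ∀ {X : C} (f g : X ⟶ Et) (h : f ≫ q = g ≫ q),
    PB.pair f g h ≫ add = PB.pair g f h.symm ≫ add
  assoc : ∀ {X : C} (f g k : X ⟶ Et)
    (h1 : f ≫ q = g ≫ q) (h2 : g ≫ q = k ≫ q)
    (h3 : (PB.pair f g h1 ≫ add) ≫ q = k ≫ q)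
    (h4 : f ≫ q = (PB.pair g k h2 ≫ add) ≫ q),
    PB.pair (PB.pair f g h1 ≫ add) k h3 ≫ add
      = PB.pair f (PB.pair g k h2 ≫ add) h4 ≫ add
  addz : ∀ {X : C} (f : X ⟶ Et) (h : f ≫ q = (f ≫ q ≫ zero) ≫ q),
    PB.pair f (f ≫ q ≫ zero) h ≫ add = f
  neg_q : neg ≫ q = q
  neg_add : ∀ {X : C} (f : X ⟶ Et) (h : f ≫ q = (f ≫ neg) ≫ q),
    PB.pair f (f ≫ neg) h ≫ add = f ≫ q ≫ zero

namespace GB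

variable (G : GB C)

lemma pair_add_q {X : C} (f g : X ⟶ G.Et) (h : f ≫ G.q = g ≫ G.q) :
    (G.PB.pair f g h ≫ G.add) ≫ G.q = f ≫ G.q := by
  rw [Category.assoc, G.add_q, ← Category.assoc, G.PB.pair_pr0]

lemma sec_q {X : C} (f : X ⟶ G.Et) : (f ≫ G.q ≫ G.zero) ≫ G.q = f ≫ G.q := by
  simp [G.zero_q]

/-- The fibre of the group bundle over a generalized point `β`. -/
def Fib {X : C} (β : X ⟶ G.Mb) := {x : X ⟶ G.Et // x ≫ G.q = β}

instance {X : C} (β : X ⟶ G.Mb) : Add (G.Fib β) :=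
  ⟨fun x y => ⟨G.PB.pair x.1 y.1 (x.2.trans y.2.symm) ≫ G.add,
    (G.pair_add_q _ _ _).trans x.2⟩⟩

instance {X : C} (β : X ⟶ G.Mb) : Zero (G.Fib β) :=
  ⟨⟨β ≫ G.zero, by rw [Category.assoc, G.zero_q, Category.comp_id]⟩⟩

instance {X : C} (β : X ⟶ G.Mb) : Neg (G.Fib β) :=
  ⟨fun x => ⟨x.1 ≫ G.neg, by rw [Category.assoc, G.neg_q, x.2]⟩⟩

instance {X : C} (β : X ⟶ G.Mb) : AddCommGroup (G.Fib β) where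
  add x y := x + y
  zero := 0
  neg x := -x
  nsmul := nsmulRec
  zsmul := zsmulRec
  add_assoc x y z := Subtype.ext (G.assoc x.1 y.1 z.1
    (x.2.trans y.2.symm) (y.2.trans z.2.symm)
    (((G.pair_add_q _ _ _).trans x.2).trans z.2.symm)
    (x.2.trans (((G.pair_add_q _ _ _).trans y.2).symm)))
  zero_add x := Subtype.ext (by
    show G.PB.pair (β ≫ G.zero) x.1 _ ≫ G.add = x.1
    rw [G.comm]
    rw [G.PB.pair_congr rfl
      (show β ≫ G.zero = x.1 ≫ G.q ≫ G.zero by rw [← Category.assoc, x.2]) _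
      (G.sec_q x.1).symm]
    exact G.addz x.1 _)
  add_zero x := Subtype.ext (by
    show G.PB.pair x.1 (β ≫ G.zero) _ ≫ G.add = x.1
    rw [G.PB.pair_congr rfl
      (show β ≫ G.zero = x.1 ≫ G.q ≫ G.zero by rw [← Category.assoc, x.2]) _
      (G.sec_q x.1).symm]
    exact G.addz x.1 _)
  add_comm x y := Subtype.ext (G.comm x.1 y.1 _)
  neg_add_cancel x := Subtype.ext (by
    show G.PB.pair (x.1 ≫ G.neg) x.1 _ ≫ G.add = β ≫ G.zero
    rw [G.comm, G.neg_add x.1 _, ← Category.assoc, x.2])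

lemma add_val {X : C} {β : X ⟶ G.Mb} (x y : G.Fib β) :
    (x + y).1 = G.PB.pair x.1 y.1 (x.2.trans y.2.symm) ≫ G.add := rfl

lemma neg_val {X : C} {β : X ⟶ G.Mb} (x : G.Fib β) : (-x).1 = x.1 ≫ G.neg := rfl

lemma zero_val {X : C} (β : X ⟶ G.Mb) : (0 : G.Fib β).1 = β ≫ G.zero := rfl

lemma sub_val {X : C} {β : X ⟶ G.Mb} (x y : G.Fib β) :
    (x - y).1 = G.PB.pair x.1 (y.1 ≫ G.neg) (x.2.trans (by rw [Category.assoc, G.neg_q, y.2])) ≫ G.add := by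
  rw [sub_eq_add_neg]
  exact G.add_val x (-y)

/-- Uniqueness of fibrewise inverses. -/
lemma invUnique {X : C} {a b : X ⟶ G.Et} (hab : b ≫ G.q = a ≫ G.q)
    (hsum : G.PB.pair a b hab.symm ≫ G.add = a ≫ G.q ≫ G.zero) :
    b = a ≫ G.neg := by
  let β := a ≫ G.q
  let a' : G.Fib β := ⟨a, rfl⟩
  let b' : G.Fib β := ⟨b, hab⟩
  have h0 : a' + b' = 0 := Subtype.ext (by
    rw [G.add_val, G.zero_val]
    exact hsum.trans (Category.assoc _ _ _).symm)
  have hb : b' = -a' := by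
    rw [eq_neg_iff_add_eq_zero, add_comm]; exact h0
  exact congrArg Subtype.val hb

end GB

/-- The tangent bundle of an object as a group bundle. -/
def gbT (D : TangentCat C) (N : HasNegatives D) (A : C) : GB C where
  Et := D.T.obj A
  Mb := A
  q := D.p.app A
  PB := D.T2 A
  add := D.add A
  zero := D.zero.app A
  neg := N.neg A
  add_q := D.add_p A
  zero_q := D.zero_p A
  comm := D.add_comm' A
  assoc := D.add_assoc' A
  addz := D.add_zero' A
  neg_q := N.neg_p A
  neg_add := N.neg_add A

/-- A differential bundle with negatives as a group bundle. -/
abbrev gbQ {D : TangentCat C} {E M : C} (B : DiffBundle D E M) (NB : BundleNegatives B) :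
    GB C where
  Et := E
  Mb := M
  q := B.q
  PB := B.E2
  add := B.addq
  zero := B.zeroq
  neg := NB.neg
  add_q := B.addq_q
  zero_q := B.zeroq_q
  comm := B.addq_comm
  assoc := B.addq_assoc
  addz := B.addq_zero
  neg_q := NB.neg_q
  neg_add := NB.neg_add

end CurvatureHelpers


section CurvatureMain

variable (D : TangentCat C)

lemma p_nat {A B' : C} (f : A ⟶ B') :
    D.T.map f ≫ D.p.app B' = D.p.app A ≫ f := by simpa using D.p.naturality f

lemma zero_nat {A B' : C} (f : A ⟶ B') :
    f ≫ D.zero.app B' = D.zero.app A ≫ D.T.map f := by simpa using D.zero.naturality f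

lemma l_nat {A B' : C} (f : A ⟶ B') :
    D.T.map f ≫ D.l.app B' = D.l.app A ≫ D.T.map (D.T.map f) := by
  simpa using D.l.naturality f

lemma c_nat {A B' : C} (f : A ⟶ B') :
    D.T.map (D.T.map f) ≫ D.c.app B' = D.c.app A ≫ D.T.map (D.T.map f) := by
  simpa using D.c.naturality f

lemma p_nat_p (A : C) :
    D.T.map (D.p.app A) ≫ D.p.app A = D.p.app (D.T.obj A) ≫ D.p.app A :=
  p_nat D (D.p.app A)

lemma zero_nat_p (A : C) :
    D.p.app A ≫ D.zero.app A = D.zero.app (D.T.obj A) ≫ D.T.map (D.p.app A) :=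
  zero_nat D (D.p.app A)

lemma add_nat_p (A : C) {X : C} (u v : X ⟶ D.T.obj (D.T.obj A))
    (h : u ≫ D.p.app (D.T.obj A) = v ≫ D.p.app (D.T.obj A))
    (h' : (u ≫ D.T.map (D.p.app A)) ≫ D.p.app A
        = (v ≫ D.T.map (D.p.app A)) ≫ D.p.app A) :
    (D.T2 (D.T.obj A)).pair u v h ≫ D.add (D.T.obj A) ≫ D.T.map (D.p.app A)
      = (D.T2 A).pair (u ≫ D.T.map (D.p.app A)) (v ≫ D.T.map (D.p.app A)) h'
          ≫ D.add A :=
  D.add_nat (D.p.app A) u v h h'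

lemma c_Tp (A : C) : D.c.app A ≫ D.T.map (D.p.app A) = D.p.app (D.T.obj A) := by
  rw [← D.c_p A, ← Category.assoc, D.c_c]; simp

lemma l_pT (A : C) :
    D.l.app A ≫ D.p.app (D.T.obj A) = D.p.app A ≫ D.zero.app A := by
  rw [← D.l_c A, Category.assoc, D.c_p, D.l_Tp]

variable {E M : C} (B : DiffBundle D E M)

/-- `λ = ⟨1, q0_q⟩ μ`. -/
lemma lam_factor (h : 𝟙 E ≫ B.q = (B.q ≫ B.zeroq) ≫ B.q) :
    B.E2.pair (𝟙 E) (B.q ≫ B.zeroq) h ≫ B.mu = B.lam := by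
  obtain ⟨w0, hw0, hw1, hmu⟩ := B.mu_spec
  set e := B.E2.pair (𝟙 E) (B.q ≫ B.zeroq) h with he
  have key : e ≫ w0 = B.lam ≫ D.T.map e := by
    apply B.TE2.hom_ext
    · have lhs : (e ≫ w0) ≫ D.T.map B.E2.pr0 = B.lam := by
        rw [Category.assoc, hw0, ← Category.assoc, he, B.E2.pair_pr0, Category.id_comp]
      have rhs : (B.lam ≫ D.T.map e) ≫ D.T.map B.E2.pr0 = B.lam := by
        rw [Category.assoc, ← D.T.map_comp, he, B.E2.pair_pr0, D.T.map_id,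
          Category.comp_id]
      rw [lhs, rhs]
    · have lhs : (e ≫ w0) ≫ D.T.map B.E2.pr1 = B.q ≫ B.zeroq ≫ D.zero.app E := by
        rw [Category.assoc, hw1, ← Category.assoc, he, B.E2.pair_pr1, Category.assoc]
      have rhs : (B.lam ≫ D.T.map e) ≫ D.T.map B.E2.pr1
          = B.q ≫ B.zeroq ≫ D.zero.app E := by
        rw [Category.assoc, ← D.T.map_comp, he, B.E2.pair_pr1, D.T.map_comp,
          ← Category.assoc, B.lam_Tq, Category.assoc, ← zero_nat D B.zeroq]
      rw [lhs, rhs]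
  have h2 : 𝟙 E ≫ B.q = (𝟙 E ≫ B.q ≫ B.zeroq) ≫ B.q := by simp [B.zeroq_q]
  have he_addq : e ≫ B.addq = 𝟙 E := by
    calc e ≫ B.addq = B.E2.pair (𝟙 E) (𝟙 E ≫ B.q ≫ B.zeroq) h2 ≫ B.addq := by
          rw [he]
          exact congrArg (· ≫ B.addq)
            (B.E2.pair_congr rfl (Category.id_comp _).symm _ _)
      _ = 𝟙 E := B.addq_zero (𝟙 E) h2
  rw [hmu, ← Category.assoc, key, Category.assoc, ← D.T.map_comp, he_addq,
    D.T.map_id, Category.comp_id]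

lemma lam_mono {X : C} (x y : X ⟶ E) (hxy : x ≫ B.lam = y ≫ B.lam) : x = y := by
  have h : 𝟙 E ≫ B.q = (B.q ≫ B.zeroq) ≫ B.q := by
    rw [Category.id_comp, Category.assoc, B.zeroq_q, Category.comp_id]
  have hf := lam_factor D B h
  set e := B.E2.pair (𝟙 E) (B.q ≫ B.zeroq) h with he
  have : (x ≫ e) ≫ B.mu = (y ≫ e) ≫ B.mu := by
    rw [Category.assoc, Category.assoc, hf, hxy]
  have hxe := B.mu_mono _ _ this
  have : (x ≫ e) ≫ B.E2.pr0 = (y ≫ e) ≫ B.E2.pr0 := by rw [hxe]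
  simpa [he, Category.assoc, B.E2.pair_pr0] using this

/-- Global form of `lam_add2`: `+_q λ` as a vertical sum. -/
lemma addq_lam (h : (B.E2.pr0 ≫ B.lam) ≫ D.p.app E = (B.E2.pr1 ≫ B.lam) ≫ D.p.app E) :
    B.addq ≫ B.lam
      = (D.T2 E).pair (B.E2.pr0 ≫ B.lam) (B.E2.pr1 ≫ B.lam) h ≫ D.add E := by
  have := B.lam_add2 B.E2.pr0 B.E2.pr1 B.E2.comm h
  rwa [B.E2.pair_id, Category.id_comp] at this

lemma lam_p_cond {X : C} (x y : X ⟶ E) (hxy : x ≫ B.q = y ≫ B.q) :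
    (x ≫ B.lam) ≫ D.p.app E = (y ≫ B.lam) ≫ D.p.app E := by
  rw [Category.assoc, Category.assoc, B.lam_p, ← Category.assoc, ← Category.assoc, hxy]

/-- Vertical additivity of the tangent lift `ℓ` (p-form). -/
lemma l_add_v (A : C) {X : C} (x y : X ⟶ D.T.obj A)
    (h : x ≫ D.p.app A = y ≫ D.p.app A)
    (h' : (x ≫ D.l.app A) ≫ D.p.app (D.T.obj A)
        = (y ≫ D.l.app A) ≫ D.p.app (D.T.obj A)) :
    (D.T2 A).pair x y h ≫ D.add A ≫ D.l.app A
      = (D.T2 (D.T.obj A)).pair (x ≫ D.l.app A) (y ≫ D.l.app A) h' ≫ D.add (D.T.obj A) := by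
  obtain ⟨w, hwa, hwb, hw⟩ := D.l_add A x y h
  have hTp : (x ≫ D.l.app A) ≫ D.T.map (D.p.app A)
      = (y ≫ D.l.app A) ≫ D.T.map (D.p.app A) := by
    rw [Category.assoc, Category.assoc, D.l_Tp, ← Category.assoc, ← Category.assoc, h]
  have hc' : ((x ≫ D.l.app A) ≫ D.c.app A) ≫ D.p.app (D.T.obj A)
      = ((y ≫ D.l.app A) ≫ D.c.app A) ≫ D.p.app (D.T.obj A) := by
    rw [Category.assoc (x ≫ D.l.app A), Category.assoc (y ≫ D.l.app A), D.c_p,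
      hTp]
  obtain ⟨w', hwa', hwb', hw'⟩ := D.c_add A (x ≫ D.l.app A) (y ≫ D.l.app A) hTp hc'
  have hww : w = w' := (D.T2T A).hom_ext _ _ (by rw [hwa, hwa']) (by rw [hwb, hwb'])
  have lc : x ≫ D.l.app A ≫ D.c.app A = x ≫ D.l.app A := by rw [D.l_c]
  have lcy : y ≫ D.l.app A ≫ D.c.app A = y ≫ D.l.app A := by rw [D.l_c]
  calc (D.T2 A).pair x y h ≫ D.add A ≫ D.l.app A
      = (D.T2 A).pair x y h ≫ D.add A ≫ D.l.app A ≫ D.c.app A := by rw [D.l_c]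
    _ = ((D.T2 A).pair x y h ≫ D.add A ≫ D.l.app A) ≫ D.c.app A := by
        simp only [Category.assoc]
    _ = (w ≫ D.T.map (D.add A)) ≫ D.c.app A := by rw [hw]
    _ = (D.T2 (D.T.obj A)).pair (x ≫ D.l.app A) (y ≫ D.l.app A) h' ≫ D.add (D.T.obj A) := by
        rw [hww, Category.assoc, hw']
        exact congrArg (· ≫ D.add (D.T.obj A))
          ((D.T2 (D.T.obj A)).pair_congr
            (by rw [Category.assoc, D.l_c])
            (by rw [Category.assoc, D.l_c]) _ _)


/-- Additivity of a vertical connection w.r.t. the vertical addition on `T(E)`. -/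
lemma K_add_v (K : D.T.obj E ⟶ E) (hK : IsVerticalConnection D B.q B.lam K)
    {X : C} (x y : X ⟶ D.T.obj E) (h : x ≫ D.p.app E = y ≫ D.p.app E)
    (h' : (x ≫ K) ≫ B.q = (y ≫ K) ≫ B.q) :
    (D.T2 E).pair x y h ≫ D.add E ≫ K
      = B.E2.pair (x ≫ K) (y ≫ K) h' ≫ B.addq := by
  obtain ⟨hK1, hK2, hK3, hK4⟩ := hK
  apply lam_mono D B
  have hcc : (x ≫ K ≫ B.lam) ≫ D.p.app E = (y ≫ K ≫ B.lam) ≫ D.p.app E := by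
    simpa only [Category.assoc] using lam_p_cond D B (x ≫ K) (y ≫ K) h'
  have hl : (x ≫ D.l.app E) ≫ D.p.app (D.T.obj E)
      = (y ≫ D.l.app E) ≫ D.p.app (D.T.obj E) := by
    simp only [Category.assoc, l_pT]
    rw [← Category.assoc, ← Category.assoc, h]
  have hTK : ((x ≫ D.l.app E) ≫ D.T.map K) ≫ D.p.app E
      = ((y ≫ D.l.app E) ≫ D.T.map K) ≫ D.p.app E := by
    have := congrArg (· ≫ K) hl
    simpa only [Category.assoc, p_nat] using this
  have step1 : ((D.T2 E).pair x y h ≫ D.add E ≫ K) ≫ B.lam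
      = (D.T2 E).pair (x ≫ K ≫ B.lam) (y ≫ K ≫ B.lam) hcc ≫ D.add E := by
    calc ((D.T2 E).pair x y h ≫ D.add E ≫ K) ≫ B.lam
        = (D.T2 E).pair x y h ≫ D.add E ≫ K ≫ B.lam := by simp only [Category.assoc]
      _ = (D.T2 E).pair x y h ≫ D.add E ≫ D.l.app E ≫ D.T.map K := by rw [hK3]
      _ = ((D.T2 (D.T.obj E)).pair (x ≫ D.l.app E) (y ≫ D.l.app E) hl
            ≫ D.add (D.T.obj E)) ≫ D.T.map K := by
          rw [reassoc_of% (l_add_v D E x y h hl)]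
          simp only [Category.assoc]
      _ = (D.T2 (D.T.obj E)).pair (x ≫ D.l.app E) (y ≫ D.l.app E) hl
            ≫ D.add (D.T.obj E) ≫ D.T.map K := by simp only [Category.assoc]
      _ = (D.T2 E).pair ((x ≫ D.l.app E) ≫ D.T.map K) ((y ≫ D.l.app E) ≫ D.T.map K) hTK
            ≫ D.add E := D.add_nat K _ _ hl hTK
      _ = (D.T2 E).pair (x ≫ K ≫ B.lam) (y ≫ K ≫ B.lam) hcc ≫ D.add E :=
          congrArg (· ≫ D.add E) ((D.T2 E).pair_congr
            (by rw [Category.assoc, ← hK3]) (by rw [Category.assoc, ← hK3]) _ _)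
  have step2 : (B.E2.pair (x ≫ K) (y ≫ K) h' ≫ B.addq) ≫ B.lam
      = (D.T2 E).pair (x ≫ K ≫ B.lam) (y ≫ K ≫ B.lam) hcc ≫ D.add E := by
    have h2 := B.lam_add2 (x ≫ K) (y ≫ K) h' (lam_p_cond D B _ _ h')
    simp only [Category.assoc] at h2 ⊢
    rw [h2]
  rw [step1, step2]

/-- `T(+_q) T(λ) c` as a vertical sum (the `lam_add2` law for `T(𝗊)`). -/
lemma Taddq_lam_c {X : C} (x y : X ⟶ D.T.obj E)
    (h : x ≫ D.T.map B.q = y ≫ D.T.map B.q)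
    (h' : (x ≫ D.T.map B.lam ≫ D.c.app E) ≫ D.p.app (D.T.obj E)
        = (y ≫ D.T.map B.lam ≫ D.c.app E) ≫ D.p.app (D.T.obj E)) :
    B.TE2.pair x y h ≫ D.T.map B.addq ≫ D.T.map B.lam ≫ D.c.app E
      = (D.T2 (D.T.obj E)).pair (x ≫ D.T.map B.lam ≫ D.c.app E)
          (y ≫ D.T.map B.lam ≫ D.c.app E) h' ≫ D.add (D.T.obj E) := by
  have h0 : (B.E2.pr0 ≫ B.lam) ≫ D.p.app E = (B.E2.pr1 ≫ B.lam) ≫ D.p.app E :=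
    lam_p_cond D B _ _ B.E2.comm
  have glam := addq_lam D B h0
  have hu : (x ≫ D.T.map B.lam) ≫ D.T.map (D.p.app E)
      = (y ≫ D.T.map B.lam) ≫ D.T.map (D.p.app E) := by
    have hlp : D.T.map B.lam ≫ D.T.map (D.p.app E) = D.T.map B.q ≫ D.T.map B.zeroq := by
      rw [← D.T.map_comp, ← D.T.map_comp, B.lam_p]
    rw [Category.assoc, Category.assoc, hlp, ← Category.assoc, ← Category.assoc, h]
  have hc' : ((x ≫ D.T.map B.lam) ≫ D.c.app E) ≫ D.p.app (D.T.obj E)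
      = ((y ≫ D.T.map B.lam) ≫ D.c.app E) ≫ D.p.app (D.T.obj E) := by
    simpa only [Category.assoc] using h'
  obtain ⟨w3, hw3a, hw3b, hw3⟩ :=
    D.c_add E (x ≫ D.T.map B.lam) (y ≫ D.T.map B.lam) hu hc'
  have hww : B.TE2.pair x y h
        ≫ D.T.map ((D.T2 E).pair (B.E2.pr0 ≫ B.lam) (B.E2.pr1 ≫ B.lam) h0) = w3 := by
    apply (D.T2T E).hom_ext
    · rw [Category.assoc, ← D.T.map_comp, (D.T2 E).pair_pr0, hw3a, D.T.map_comp,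
        ← Category.assoc, B.TE2.pair_pr0]
    · rw [Category.assoc, ← D.T.map_comp, (D.T2 E).pair_pr1, hw3b, D.T.map_comp,
        ← Category.assoc, B.TE2.pair_pr1]
  calc B.TE2.pair x y h ≫ D.T.map B.addq ≫ D.T.map B.lam ≫ D.c.app E
      = B.TE2.pair x y h ≫ D.T.map (B.addq ≫ B.lam) ≫ D.c.app E := by
        rw [D.T.map_comp, Category.assoc]
    _ = (B.TE2.pair x y h
          ≫ D.T.map ((D.T2 E).pair (B.E2.pr0 ≫ B.lam) (B.E2.pr1 ≫ B.lam) h0))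
          ≫ D.T.map (D.add E) ≫ D.c.app E := by
        rw [glam, D.T.map_comp]
        simp only [Category.assoc]
    _ = w3 ≫ D.T.map (D.add E) ≫ D.c.app E := by rw [hww]
    _ = (D.T2 (D.T.obj E)).pair ((x ≫ D.T.map B.lam) ≫ D.c.app E)
          ((y ≫ D.T.map B.lam) ≫ D.c.app E) hc' ≫ D.add (D.T.obj E) := hw3
    _ = (D.T2 (D.T.obj E)).pair (x ≫ D.T.map B.lam ≫ D.c.app E)
          (y ≫ D.T.map B.lam ≫ D.c.app E) h' ≫ D.add (D.T.obj E) :=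
        congrArg (· ≫ D.add (D.T.obj E)) ((D.T2 (D.T.obj E)).pair_congr
          (Category.assoc _ _ _) (Category.assoc _ _ _) _ _)

/-- Additivity of a vertical connection w.r.t. `T(+_q)`. -/
lemma K_add_T (K : D.T.obj E ⟶ E) (hK : IsVerticalConnection D B.q B.lam K)
    {X : C} (x y : X ⟶ D.T.obj E) (h : x ≫ D.T.map B.q = y ≫ D.T.map B.q)
    (h' : (x ≫ K) ≫ B.q = (y ≫ K) ≫ B.q) :
    B.TE2.pair x y h ≫ D.T.map B.addq ≫ K
      = B.E2.pair (x ≫ K) (y ≫ K) h' ≫ B.addq := by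
  obtain ⟨hK1, hK2, hK3, hK4⟩ := hK
  apply lam_mono D B
  have hcc : (x ≫ K ≫ B.lam) ≫ D.p.app E = (y ≫ K ≫ B.lam) ≫ D.p.app E := by
    simpa only [Category.assoc] using lam_p_cond D B (x ≫ K) (y ≫ K) h'
  have h'' : (x ≫ D.T.map B.lam ≫ D.c.app E) ≫ D.p.app (D.T.obj E)
      = (y ≫ D.T.map B.lam ≫ D.c.app E) ≫ D.p.app (D.T.obj E) := by
    simp only [Category.assoc, D.c_p]
    rw [← D.T.map_comp, B.lam_p, D.T.map_comp]
    rw [← Category.assoc, h, Category.assoc]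
  have hTK2 : ((x ≫ D.T.map B.lam ≫ D.c.app E) ≫ D.T.map K) ≫ D.p.app E
      = ((y ≫ D.T.map B.lam ≫ D.c.app E) ≫ D.T.map K) ≫ D.p.app E := by
    have := congrArg (· ≫ K) h''
    simpa only [Category.assoc, p_nat] using this
  have step1 : (B.TE2.pair x y h ≫ D.T.map B.addq ≫ K) ≫ B.lam
      = (D.T2 E).pair (x ≫ K ≫ B.lam) (y ≫ K ≫ B.lam) hcc ≫ D.add E := by
    calc (B.TE2.pair x y h ≫ D.T.map B.addq ≫ K) ≫ B.lam
        = B.TE2.pair x y h ≫ D.T.map B.addq ≫ K ≫ B.lam := by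
          simp only [Category.assoc]
      _ = B.TE2.pair x y h ≫ D.T.map B.addq ≫ D.T.map B.lam ≫ D.c.app E ≫ D.T.map K := by
          rw [hK4]
      _ = ((D.T2 (D.T.obj E)).pair (x ≫ D.T.map B.lam ≫ D.c.app E)
            (y ≫ D.T.map B.lam ≫ D.c.app E) h'' ≫ D.add (D.T.obj E)) ≫ D.T.map K := by
          rw [reassoc_of% (Taddq_lam_c D B x y h h'')]
          simp only [Category.assoc]
      _ = (D.T2 (D.T.obj E)).pair (x ≫ D.T.map B.lam ≫ D.c.app E)
            (y ≫ D.T.map B.lam ≫ D.c.app E) h'' ≫ D.add (D.T.obj E) ≫ D.T.map K := by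
          simp only [Category.assoc]
      _ = (D.T2 E).pair ((x ≫ D.T.map B.lam ≫ D.c.app E) ≫ D.T.map K)
            ((y ≫ D.T.map B.lam ≫ D.c.app E) ≫ D.T.map K) hTK2 ≫ D.add E :=
          D.add_nat K _ _ h'' hTK2
      _ = (D.T2 E).pair (x ≫ K ≫ B.lam) (y ≫ K ≫ B.lam) hcc ≫ D.add E :=
          congrArg (· ≫ D.add E) ((D.T2 E).pair_congr
            (by simp only [Category.assoc]; rw [← hK4])
            (by simp only [Category.assoc]; rw [← hK4]) _ _)
  have step2 : (B.E2.pair (x ≫ K) (y ≫ K) h' ≫ B.addq) ≫ B.lam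
      = (D.T2 E).pair (x ≫ K ≫ B.lam) (y ≫ K ≫ B.lam) hcc ≫ D.add E := by
    have h2 := B.lam_add2 (x ≫ K) (y ≫ K) h' (lam_p_cond D B _ _ h')
    simp only [Category.assoc] at h2 ⊢
    rw [h2]
  rw [step1, step2]


/-- A vertical connection preserves zeros: `0_E K = q 0_q`. -/
lemma zero_K (N : HasNegatives D) (NB : BundleNegatives B)
    (K : D.T.obj E ⟶ E) (hK : IsVerticalConnection D B.q B.lam K) :
    D.zero.app E ≫ K = B.q ≫ B.zeroq := by
  obtain ⟨hK1, hK2, hK3, hK4⟩ := hK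
  have hpair : (D.T2 E).pair (D.zero.app E) (D.zero.app E) rfl ≫ D.add E
      = D.zero.app E := by
    have h2 : D.zero.app E ≫ D.p.app E
        = (D.zero.app E ≫ D.p.app E ≫ D.zero.app E) ≫ D.p.app E := by
      simp [D.zero_p]
    calc (D.T2 E).pair (D.zero.app E) (D.zero.app E) rfl ≫ D.add E
        = (D.T2 E).pair (D.zero.app E) (D.zero.app E ≫ D.p.app E ≫ D.zero.app E) h2
            ≫ D.add E := by
          exact congrArg (· ≫ D.add E) ((D.T2 E).pair_congr rfl
            (by rw [← Category.assoc, D.zero_p]; simp) _ _)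
      _ = D.zero.app E := D.add_zero' E (D.zero.app E) h2
  have hzq : (D.zero.app E ≫ K) ≫ B.q = B.q := by
    rw [Category.assoc, hK2, ← Category.assoc, D.zero_p]; simp
  have hsum : B.E2.pair (D.zero.app E ≫ K) (D.zero.app E ≫ K) rfl ≫ B.addq
      = D.zero.app E ≫ K := by
    have := K_add_v D B K ⟨hK1, hK2, hK3, hK4⟩ (D.zero.app E) (D.zero.app E) rfl rfl
    rw [← Category.assoc, hpair] at this
    exact this.symm
  let Gq := gbQ B NB
  let z' : Gq.Fib B.q := ⟨D.zero.app E ≫ K, hzq⟩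
  have hz' : z' + z' = z' := Subtype.ext hsum
  have h0 : z' = 0 := add_right_cancel (hz'.trans (zero_add z').symm)
  exact congrArg Subtype.val h0

/-- `qsub` as subtraction in the fibre group. -/
lemma qsub_val (NB : BundleNegatives B) {X : C} {β : X ⟶ M}
    (x y : (gbQ B NB).Fib β) :
    B.qsub NB x.1 y.1 = (x - y).1 := by
  have h : x.1 ≫ B.q = (y.1 ≫ NB.neg) ≫ B.q := by
    rw [Category.assoc, NB.neg_q]
    exact x.2.trans y.2.symm
  rw [DiffBundle.qsub, DiffBundle.qadd, dif_pos h]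
  exact ((gbQ B NB).sub_val x y).symm

/-- The key bracket lemma: `f T²(s) T(K) K = {f} T(s) K`. -/
lemma brk_comp (N : HasNegatives D) (NB : BundleNegatives B)
    (K : D.T.obj E ⟶ E) (hK : IsVerticalConnection D B.q B.lam K)
    (s : M ⟶ E) (hs : s ≫ B.q = 𝟙 M)
    {X : C} (f : X ⟶ D.T.obj (D.T.obj M))
    (hcond : f ≫ D.T.map (D.p.app M)
        = f ≫ D.T.map (D.p.app M) ≫ D.p.app M ≫ D.zero.app M) :
    f ≫ D.T.map (D.T.map s) ≫ D.T.map K ≫ K = D.brkT f ≫ D.T.map s ≫ K := by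
  obtain ⟨hK1, hK2, hK3, hK4⟩ := hK
  set phi : D.T.obj M ⟶ E := D.T.map s ≫ K with hphi
  have hphiq : phi ≫ B.q = D.p.app M := by
    rw [hphi, Category.assoc, hK2, ← Category.assoc, p_nat, Category.assoc, hs]
    simp
  -- global additivity of phi
  have hTs : ((D.T2 M).pr0 ≫ D.T.map s) ≫ D.p.app E
      = ((D.T2 M).pr1 ≫ D.T.map s) ≫ D.p.app E := by
    simp only [Category.assoc, p_nat]
    rw [← Category.assoc, ← Category.assoc, (D.T2 M).comm]
  have hTsK : (((D.T2 M).pr0 ≫ D.T.map s) ≫ K) ≫ B.q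
      = (((D.T2 M).pr1 ≫ D.T.map s) ≫ K) ≫ B.q := by
    simp only [Category.assoc, hK2]
    rw [reassoc_of% (p_nat D s), reassoc_of% (D.T2 M).comm]
  have hcondpair : ((D.T2 M).pr0 ≫ phi) ≫ B.q = ((D.T2 M).pr1 ≫ phi) ≫ B.q := by
    simp only [Category.assoc, hphiq]; exact (D.T2 M).comm
  have gadd : D.add M ≫ phi
      = B.E2.pair ((D.T2 M).pr0 ≫ phi) ((D.T2 M).pr1 ≫ phi) hcondpair ≫ B.addq := by
    have anat := D.add_nat s (D.T2 M).pr0 (D.T2 M).pr1 (D.T2 M).comm hTs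
    rw [(D.T2 M).pair_id, Category.id_comp] at anat
    have kv := K_add_v D B K ⟨hK1, hK2, hK3, hK4⟩ _ _ hTs hTsK
    calc D.add M ≫ phi = (D.add M ≫ D.T.map s) ≫ K := by
          rw [hphi, Category.assoc]
      _ = ((D.T2 E).pair ((D.T2 M).pr0 ≫ D.T.map s) ((D.T2 M).pr1 ≫ D.T.map s) hTs
            ≫ D.add E) ≫ K := by rw [anat]
      _ = B.E2.pair (((D.T2 M).pr0 ≫ D.T.map s) ≫ K) (((D.T2 M).pr1 ≫ D.T.map s) ≫ K)
            hTsK ≫ B.addq := by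
          simp only [Category.assoc] at kv ⊢
          rw [kv]
      _ = _ := congrArg (· ≫ B.addq) (B.E2.pair_congr
            (Category.assoc _ _ _) (Category.assoc _ _ _) _ _)
  -- decompose f through the universality of the vertical lift
  have hbrk : D.brkT f = D.vlift f hcond ≫ (D.T2 M).pr0 := by
    simp only [TangentCat.brkT]
    rw [dif_pos hcond]
  obtain ⟨w0, hw0a, hw0b, hw0⟩ := D.vmu_spec M
  set V0 := D.vlift f hcond with hV0
  have hf : f = V0 ≫ w0 ≫ D.T.map (D.add M) := by
    rw [← D.vlift_vmu f hcond, hw0, ← hV0]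
  have lphi : D.l.app M ≫ D.T.map phi = phi ≫ B.lam := by
    rw [hphi, D.T.map_comp, ← Category.assoc, ← l_nat D s, Category.assoc, ← hK3,
      Category.assoc]
  have Tgadd : D.T.map (D.add M) ≫ D.T.map phi
      = D.T.map (B.E2.pair ((D.T2 M).pr0 ≫ phi) ((D.T2 M).pr1 ≫ phi) hcondpair)
          ≫ D.T.map B.addq := by
    rw [← D.T.map_comp, ← D.T.map_comp, gadd]
  have hw1a : (V0 ≫ w0
        ≫ D.T.map (B.E2.pair ((D.T2 M).pr0 ≫ phi) ((D.T2 M).pr1 ≫ phi) hcondpair))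
        ≫ D.T.map B.E2.pr0 = V0 ≫ (D.T2 M).pr0 ≫ phi ≫ B.lam := by
    simp only [Category.assoc]
    rw [← D.T.map_comp, B.E2.pair_pr0, D.T.map_comp, reassoc_of% hw0a, lphi]
  have hw1b : (V0 ≫ w0
        ≫ D.T.map (B.E2.pair ((D.T2 M).pr0 ≫ phi) ((D.T2 M).pr1 ≫ phi) hcondpair))
        ≫ D.T.map B.E2.pr1 = V0 ≫ (D.T2 M).pr1 ≫ phi ≫ D.zero.app E := by
    simp only [Category.assoc]
    rw [← D.T.map_comp, B.E2.pair_pr1, D.T.map_comp, reassoc_of% hw0b,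
      ← zero_nat D phi]
  have huv : (V0 ≫ (D.T2 M).pr0 ≫ phi ≫ B.lam) ≫ D.T.map B.q
      = (V0 ≫ (D.T2 M).pr1 ≫ phi ≫ D.zero.app E) ≫ D.T.map B.q := by
    simp only [Category.assoc]
    rw [B.lam_Tq, (zero_nat D B.q).symm, reassoc_of% hphiq,
      reassoc_of% (D.T2 M).comm]
  have hw1pair : V0 ≫ w0
        ≫ D.T.map (B.E2.pair ((D.T2 M).pr0 ≫ phi) ((D.T2 M).pr1 ≫ phi) hcondpair)
      = B.TE2.pair (V0 ≫ (D.T2 M).pr0 ≫ phi ≫ B.lam)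
          (V0 ≫ (D.T2 M).pr1 ≫ phi ≫ D.zero.app E) huv := by
    apply B.TE2.hom_ext
    · rw [hw1a, B.TE2.pair_pr0]
    · rw [hw1b, B.TE2.pair_pr1]
  have huK : (V0 ≫ (D.T2 M).pr0 ≫ phi ≫ B.lam) ≫ K = V0 ≫ (D.T2 M).pr0 ≫ phi := by
    simp only [Category.assoc, hK1, Category.comp_id]
  have hvK : (V0 ≫ (D.T2 M).pr1 ≫ phi ≫ D.zero.app E) ≫ K
      = (V0 ≫ (D.T2 M).pr0 ≫ phi) ≫ B.q ≫ B.zeroq := by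
    simp only [Category.assoc]
    rw [zero_K D B N NB K ⟨hK1, hK2, hK3, hK4⟩, reassoc_of% hphiq,
      reassoc_of% (D.T2 M).comm.symm, ← reassoc_of% hphiq]
  have hfin : ((V0 ≫ (D.T2 M).pr0 ≫ phi ≫ B.lam) ≫ K) ≫ B.q
      = ((V0 ≫ (D.T2 M).pr1 ≫ phi ≫ D.zero.app E) ≫ K) ≫ B.q := by
    rw [huK, hvK]
    simp [B.zeroq_q]
  have hz2 : (V0 ≫ (D.T2 M).pr0 ≫ phi) ≫ B.q
      = ((V0 ≫ (D.T2 M).pr0 ≫ phi) ≫ B.q ≫ B.zeroq) ≫ B.q := by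
    simp [B.zeroq_q]
  calc f ≫ D.T.map (D.T.map s) ≫ D.T.map K ≫ K
      = V0 ≫ w0 ≫ D.T.map (D.add M) ≫ D.T.map phi ≫ K := by
        rw [hf]
        simp only [Category.assoc]
        rw [hphi, D.T.map_comp]
        simp only [Category.assoc]
    _ = V0 ≫ w0
          ≫ D.T.map (B.E2.pair ((D.T2 M).pr0 ≫ phi) ((D.T2 M).pr1 ≫ phi) hcondpair)
          ≫ D.T.map B.addq ≫ K := by rw [reassoc_of% Tgadd]
    _ = B.TE2.pair (V0 ≫ (D.T2 M).pr0 ≫ phi ≫ B.lam)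
          (V0 ≫ (D.T2 M).pr1 ≫ phi ≫ D.zero.app E) huv ≫ D.T.map B.addq ≫ K := by
        rw [reassoc_of% hw1pair]
    _ = B.E2.pair ((V0 ≫ (D.T2 M).pr0 ≫ phi ≫ B.lam) ≫ K)
          ((V0 ≫ (D.T2 M).pr1 ≫ phi ≫ D.zero.app E) ≫ K) hfin ≫ B.addq :=
        K_add_T D B K ⟨hK1, hK2, hK3, hK4⟩ _ _ huv hfin
    _ = B.E2.pair (V0 ≫ (D.T2 M).pr0 ≫ phi)
          ((V0 ≫ (D.T2 M).pr0 ≫ phi) ≫ B.q ≫ B.zeroq) hz2 ≫ B.addq :=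
        congrArg (· ≫ B.addq) (B.E2.pair_congr huK hvK _ _)
    _ = V0 ≫ (D.T2 M).pr0 ≫ phi := B.addq_zero _ hz2
    _ = D.brkT f ≫ phi := by rw [hbrk, Category.assoc]

end CurvatureMain



/-- In a tangent category with negatives, for a vertical
connection `K` on a differential bundle `𝗊` (whose fibrewise addition has
negatives `NB`), vector fields `w₁, w₂` on `M` and a section `s` of `q`, the
curvature tensor `R_K(w₁,w₂,s) = w₂T(w₁)T²(s)C_K` (with
`C_K = cT(K)K − T(K)K`) is given by the standard expression
`∇_K(w₁, ∇_K(w₂,s)) − ∇_K(w₂, ∇_K(w₁,s)) − ∇_K([w₁,w₂],s)`. -/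
theorem stmt5 (D : TangentCat C) (N : HasNegatives D) {E M : C}
    (B : DiffBundle D E M) (NB : BundleNegatives B)
    (K : D.T.obj E ⟶ E) (hK : IsVerticalConnection D B.q B.lam K)
    (w1 w2 : M ⟶ D.T.obj M) (hw1 : w1 ≫ D.p.app M = 𝟙 M)
    (hw2 : w2 ≫ D.p.app M = 𝟙 M)
    (s : M ⟶ E) (hs : s ≫ B.q = 𝟙 M) :
    w2 ≫ D.T.map w1 ≫ D.T.map (D.T.map s) ≫
        B.qsub NB (D.c.app E ≫ D.T.map K ≫ K) (D.T.map K ≫ K)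
      = B.qsub NB
          (B.qsub NB (nabla D K w1 (nabla D K w2 s))
            (nabla D K w2 (nabla D K w1 s)))
          (nabla D K (D.lie N w1 w2) s) := by
  have hK1 := hK.1
  have hK2 := hK.2.1
  have hK3 := hK.2.2.1
  have hK4 := hK.2.2.2
  have hKfull : IsVerticalConnection D B.q B.lam K := ⟨hK1, hK2, hK3, hK4⟩
  set psi : D.T.obj (D.T.obj M) ⟶ E := D.T.map (D.T.map s) ≫ D.T.map K ≫ K with hpsi
  -- basic projections
  have hupTM : (w1 ≫ D.T.map w2) ≫ D.p.app (D.T.obj M) = w2 := by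
    rw [Category.assoc, p_nat D w2, reassoc_of% hw1]
  have hvpTM : (w2 ≫ D.T.map w1 ≫ D.c.app M) ≫ D.p.app (D.T.obj M) = w2 := by
    simp only [Category.assoc, D.c_p]
    rw [← D.T.map_comp, hw1, D.T.map_id, Category.comp_id]
  have hpsiq : psi ≫ B.q = D.p.app (D.T.obj M) ≫ D.p.app M := by
    rw [hpsi]
    simp only [Category.assoc, hK2]
    rw [reassoc_of% (p_nat D K), hK2, reassoc_of% (p_nat D (D.T.map s)),
      reassoc_of% (p_nat D s), hs]
    simp
  have hAq : ((w1 ≫ D.T.map w2) ≫ psi) ≫ B.q = 𝟙 M := by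
    rw [Category.assoc, hpsiq, ← Category.assoc, hupTM, hw2]
  have hVq : ((w2 ≫ D.T.map w1 ≫ D.c.app M) ≫ psi) ≫ B.q = 𝟙 M := by
    rw [Category.assoc, hpsiq, ← Category.assoc, hvpTM, hw2]
  have hA : nabla D K w1 (nabla D K w2 s) = (w1 ≫ D.T.map w2) ≫ psi := by
    simp only [nabla]
    rw [hpsi, D.T.map_comp, D.T.map_comp]
    simp only [Category.assoc]
  have hBt : nabla D K w2 (nabla D K w1 s) = (w2 ≫ D.T.map w1) ≫ psi := by
    simp only [nabla]
    rw [hpsi, D.T.map_comp, D.T.map_comp]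
    simp only [Category.assoc]
  have hBtq : nabla D K w2 (nabla D K w1 s) ≫ B.q = 𝟙 M := by
    rw [hBt, Category.assoc, hpsiq, Category.assoc, reassoc_of% (p_nat D w1),
      reassoc_of% hw2, hw1]
  -- elementwise additivity of psi
  have hTphi : psi = D.T.map (D.T.map s ≫ K) ≫ K := by
    rw [hpsi, D.T.map_comp, Category.assoc]
  have addpsi : ∀ {Y : C} (x y : Y ⟶ D.T.obj (D.T.obj M))
      (h : x ≫ D.p.app (D.T.obj M) = y ≫ D.p.app (D.T.obj M))
      (h' : (x ≫ psi) ≫ B.q = (y ≫ psi) ≫ B.q),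
      (D.T2 (D.T.obj M)).pair x y h ≫ D.add (D.T.obj M) ≫ psi
        = B.E2.pair (x ≫ psi) (y ≫ psi) h' ≫ B.addq := by
    intro Y x y h h'
    have hphiTE : (x ≫ D.T.map (D.T.map s ≫ K)) ≫ D.p.app E
        = (y ≫ D.T.map (D.T.map s ≫ K)) ≫ D.p.app E := by
      have := congrArg (· ≫ (D.T.map s ≫ K)) h
      simpa only [Category.assoc, p_nat] using this
    have h'' : ((x ≫ D.T.map (D.T.map s ≫ K)) ≫ K) ≫ B.q
        = ((y ≫ D.T.map (D.T.map s ≫ K)) ≫ K) ≫ B.q := by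
      simp only [Category.assoc]
      rw [reassoc_of% hTphi.symm]
      simpa only [Category.assoc] using h'
    have anat := D.add_nat (D.T.map s ≫ K) x y h hphiTE
    calc (D.T2 (D.T.obj M)).pair x y h ≫ D.add (D.T.obj M) ≫ psi
        = (D.T2 (D.T.obj M)).pair x y h ≫ D.add (D.T.obj M)
            ≫ D.T.map (D.T.map s ≫ K) ≫ K := by rw [hTphi]
      _ = (D.T2 E).pair (x ≫ D.T.map (D.T.map s ≫ K)) (y ≫ D.T.map (D.T.map s ≫ K))
            hphiTE ≫ D.add E ≫ K := by rw [reassoc_of% anat]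
      _ = B.E2.pair ((x ≫ D.T.map (D.T.map s ≫ K)) ≫ K)
            ((y ≫ D.T.map (D.T.map s ≫ K)) ≫ K) h'' ≫ B.addq :=
          K_add_v D B K hKfull _ _ hphiTE h''
      _ = B.E2.pair (x ≫ psi) (y ≫ psi) h' ≫ B.addq :=
          congrArg (· ≫ B.addq) (B.E2.pair_congr
            (by rw [hTphi, Category.assoc]) (by rw [hTphi, Category.assoc]) _ _)
  -- LHS as a fibrewise difference
  have hq1 : (D.c.app E ≫ D.T.map K ≫ K) ≫ B.q
      = ((D.T.map K ≫ K) ≫ NB.neg) ≫ B.q := by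
    simp only [Category.assoc, NB.neg_q, hK2]
    rw [reassoc_of% (p_nat D K)]
    simp only [hK2]
    rw [reassoc_of% (D.c_p E), reassoc_of% (p_nat D (D.p.app E))]
  have hqsub1 : B.qsub NB (D.c.app E ≫ D.T.map K ≫ K) (D.T.map K ≫ K)
      = B.E2.pair (D.c.app E ≫ D.T.map K ≫ K) ((D.T.map K ≫ K) ≫ NB.neg) hq1
          ≫ B.addq := dif_pos hq1
  have hqv : ((w2 ≫ D.T.map w1 ≫ D.c.app M) ≫ psi) ≫ B.q
      = (nabla D K w2 (nabla D K w1 s) ≫ NB.neg) ≫ B.q := by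
    have h2 : (nabla D K w2 (nabla D K w1 s) ≫ NB.neg) ≫ B.q = 𝟙 M := by
      rw [Category.assoc, NB.neg_q]
      exact hBtq
    exact hVq.trans h2.symm
  have hqsub2 : B.qsub NB ((w2 ≫ D.T.map w1 ≫ D.c.app M) ≫ psi)
        (nabla D K w2 (nabla D K w1 s))
      = B.E2.pair ((w2 ≫ D.T.map w1 ≫ D.c.app M) ≫ psi)
          (nabla D K w2 (nabla D K w1 s) ≫ NB.neg) hqv ≫ B.addq := dif_pos hqv
  have hq1' : (D.c.app E ≫ D.T.map K ≫ K) ≫ B.q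
      = (D.T.map K ≫ K ≫ NB.neg) ≫ B.q := by
    have h9 := hq1
    simp only [Category.assoc] at h9 ⊢
    exact h9
  have hqsub1' : B.qsub NB (D.c.app E ≫ D.T.map K ≫ K) (D.T.map K ≫ K)
      = B.E2.pair (D.c.app E ≫ D.T.map K ≫ K) (D.T.map K ≫ K ≫ NB.neg) hq1'
          ≫ B.addq := by
    rw [hqsub1]
    exact congrArg (· ≫ B.addq)
      (B.E2.pair_congr rfl (Category.assoc _ _ _) _ _)
  have hLHS : w2 ≫ D.T.map w1 ≫ D.T.map (D.T.map s)
        ≫ B.qsub NB (D.c.app E ≫ D.T.map K ≫ K) (D.T.map K ≫ K)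
      = B.qsub NB ((w2 ≫ D.T.map w1 ≫ D.c.app M) ≫ psi)
          (nabla D K w2 (nabla D K w1 s)) := by
    rw [hqsub1', hqsub2,
      reassoc_of% (B.E2.pre_pair (D.T.map (D.T.map s)) _ _ hq1')]
    rw [reassoc_of% (B.E2.pre_pair (D.T.map w1) _ _ _)]
    rw [reassoc_of% (B.E2.pre_pair w2 _ _ _)]
    refine congrArg (· ≫ B.addq) (B.E2.pair_congr ?_ ?_ _ _)
    · simp only [Category.assoc]
      rw [reassoc_of% (c_nat D s), hpsi]
    · rw [hBt, hpsi]
      simp only [Category.assoc]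
  -- decomposition of the Lie bracket argument
  have hfc : (w1 ≫ D.T.map w2) ≫ D.p.app (D.T.obj M)
      = ((w2 ≫ D.T.map w1 ≫ D.c.app M) ≫ N.neg (D.T.obj M)) ≫ D.p.app (D.T.obj M) := by
    rw [hupTM, Category.assoc, N.neg_p, hvpTM]
  have hfc2 : (w2 ≫ D.T.map w1 ≫ D.c.app M) ≫ D.p.app (D.T.obj M)
      = ((w2 ≫ D.T.map w1 ≫ D.c.app M) ≫ N.neg (D.T.obj M)) ≫ D.p.app (D.T.obj M) := by
    rw [hvpTM, Category.assoc, N.neg_p, hvpTM]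
  have hfeq : D.sub N (w1 ≫ D.T.map w2) (w2 ≫ D.T.map w1 ≫ D.c.app M)
      = (D.T2 (D.T.obj M)).pair (w1 ≫ D.T.map w2)
          ((w2 ≫ D.T.map w1 ≫ D.c.app M) ≫ N.neg (D.T.obj M)) hfc
          ≫ D.add (D.T.obj M) := dif_pos hfc
  -- negation compatibility with T(p)
  have negTp_ab : (((w2 ≫ D.T.map w1 ≫ D.c.app M) ≫ N.neg (D.T.obj M))
        ≫ D.T.map (D.p.app M)) ≫ D.p.app M
      = ((w2 ≫ D.T.map w1 ≫ D.c.app M) ≫ D.T.map (D.p.app M)) ≫ D.p.app M := by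
    simp only [Category.assoc]
    rw [p_nat_p D M, reassoc_of% (N.neg_p (D.T.obj M))]
  have negTp_sum : (D.T2 M).pair
        ((w2 ≫ D.T.map w1 ≫ D.c.app M) ≫ D.T.map (D.p.app M))
        (((w2 ≫ D.T.map w1 ≫ D.c.app M) ≫ N.neg (D.T.obj M)) ≫ D.T.map (D.p.app M))
        negTp_ab.symm ≫ D.add M
      = ((w2 ≫ D.T.map w1 ≫ D.c.app M) ≫ D.T.map (D.p.app M))
          ≫ D.p.app M ≫ D.zero.app M := by
    have h0 := N.neg_add (D.T.obj M) (w2 ≫ D.T.map w1 ≫ D.c.app M) hfc2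
    rw [← add_nat_p D M (w2 ≫ D.T.map w1 ≫ D.c.app M)
        ((w2 ≫ D.T.map w1 ≫ D.c.app M) ≫ N.neg (D.T.obj M)) hfc2 negTp_ab.symm]
    rw [← Category.assoc, h0]
    simp only [Category.assoc]
    rw [← zero_nat_p D M, reassoc_of% (p_nat_p D M)]
  have negTp : ((w2 ≫ D.T.map w1 ≫ D.c.app M) ≫ N.neg (D.T.obj M))
        ≫ D.T.map (D.p.app M)
      = ((w2 ≫ D.T.map w1 ≫ D.c.app M) ≫ D.T.map (D.p.app M)) ≫ N.neg M :=
    (gbT D N M).invUnique negTp_ab negTp_sum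
  -- negation compatibility with psi
  have hvneg_q : (((w2 ≫ D.T.map w1 ≫ D.c.app M) ≫ N.neg (D.T.obj M)) ≫ psi) ≫ B.q
      = ((w2 ≫ D.T.map w1 ≫ D.c.app M) ≫ psi) ≫ B.q := by
    simp only [Category.assoc, hpsiq]
    rw [reassoc_of% (N.neg_p (D.T.obj M))]
  have zpsi : D.zero.app (D.T.obj M) ≫ psi = D.p.app M ≫ B.zeroq := by
    rw [hTphi, ← Category.assoc, ← zero_nat D (D.T.map s ≫ K), Category.assoc,
      zero_K D B N NB K hKfull]
    simp only [Category.assoc]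
    rw [reassoc_of% hK2, reassoc_of% (p_nat D s), reassoc_of% hs]
  have haveL : (D.T2 (D.T.obj M)).pair (w2 ≫ D.T.map w1 ≫ D.c.app M)
        ((w2 ≫ D.T.map w1 ≫ D.c.app M) ≫ N.neg (D.T.obj M)) hfc2
        ≫ D.add (D.T.obj M) ≫ psi
      = (w2 ≫ D.T.map w1 ≫ D.c.app M) ≫ D.p.app (D.T.obj M) ≫ D.p.app M ≫ B.zeroq := by
    have h0 := N.neg_add (D.T.obj M) (w2 ≫ D.T.map w1 ≫ D.c.app M) hfc2
    rw [← Category.assoc, h0]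
    simp only [Category.assoc]
    rw [zpsi]
  have haveR : ((w2 ≫ D.T.map w1 ≫ D.c.app M) ≫ psi) ≫ B.q ≫ B.zeroq
      = (w2 ≫ D.T.map w1 ≫ D.c.app M) ≫ D.p.app (D.T.obj M) ≫ D.p.app M ≫ B.zeroq := by
    simp only [Category.assoc]
    rw [reassoc_of% hpsiq]
  have negpsi_sum : B.E2.pair ((w2 ≫ D.T.map w1 ≫ D.c.app M) ≫ psi)
        (((w2 ≫ D.T.map w1 ≫ D.c.app M) ≫ N.neg (D.T.obj M)) ≫ psi)
        hvneg_q.symm ≫ B.addq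
      = ((w2 ≫ D.T.map w1 ≫ D.c.app M) ≫ psi) ≫ B.q ≫ B.zeroq := by
    rw [← addpsi (w2 ≫ D.T.map w1 ≫ D.c.app M)
        ((w2 ≫ D.T.map w1 ≫ D.c.app M) ≫ N.neg (D.T.obj M)) hfc2 hvneg_q.symm]
    rw [haveL, haveR]
  have negpsi : ((w2 ≫ D.T.map w1 ≫ D.c.app M) ≫ N.neg (D.T.obj M)) ≫ psi
      = ((w2 ≫ D.T.map w1 ≫ D.c.app M) ≫ psi) ≫ NB.neg :=
    (gbQ B NB).invUnique hvneg_q negpsi_sum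
  -- the bracket condition for the Lie argument
  have hu'Tp : (w1 ≫ D.T.map w2) ≫ D.T.map (D.p.app M) = w1 := by
    rw [Category.assoc, ← D.T.map_comp, hw2, D.T.map_id, Category.comp_id]
  have hv'Tp : (w2 ≫ D.T.map w1 ≫ D.c.app M) ≫ D.T.map (D.p.app M) = w1 := by
    simp only [Category.assoc, c_Tp, p_nat]
    rw [reassoc_of% hw2]
  have hvnegTp : ((w2 ≫ D.T.map w1 ≫ D.c.app M) ≫ N.neg (D.T.obj M))
        ≫ D.T.map (D.p.app M) = w1 ≫ N.neg M := by
    rw [negTp, hv'Tp]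
  have h9 : w1 ≫ D.p.app M = (w1 ≫ N.neg M) ≫ D.p.app M := by
    rw [Category.assoc, N.neg_p]
  have hfTp2 : ((w1 ≫ D.T.map w2) ≫ D.T.map (D.p.app M)) ≫ D.p.app M
      = (((w2 ≫ D.T.map w1 ≫ D.c.app M) ≫ N.neg (D.T.obj M))
          ≫ D.T.map (D.p.app M)) ≫ D.p.app M := by
    rw [hu'Tp, hvnegTp, ← h9]
  have hfTp : D.sub N (w1 ≫ D.T.map w2) (w2 ≫ D.T.map w1 ≫ D.c.app M)
        ≫ D.T.map (D.p.app M) = D.zero.app M := by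
    rw [hfeq, Category.assoc,
      add_nat_p D M _ _ hfc hfTp2,
      congrArg (· ≫ D.add M) ((D.T2 M).pair_congr hu'Tp hvnegTp hfTp2 h9),
      N.neg_add M w1 h9, reassoc_of% hw1]
  have hcondf : D.sub N (w1 ≫ D.T.map w2) (w2 ≫ D.T.map w1 ≫ D.c.app M)
        ≫ D.T.map (D.p.app M)
      = D.sub N (w1 ≫ D.T.map w2) (w2 ≫ D.T.map w1 ≫ D.c.app M)
        ≫ D.T.map (D.p.app M) ≫ D.p.app M ≫ D.zero.app M := by
    have h2 : D.sub N (w1 ≫ D.T.map w2) (w2 ≫ D.T.map w1 ≫ D.c.app M)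
        ≫ D.T.map (D.p.app M) ≫ D.p.app M ≫ D.zero.app M = D.zero.app M := by
      rw [← Category.assoc, hfTp, ← Category.assoc, D.zero_p]
      simp
    rw [hfTp, h2]
  -- the covariant derivative along the Lie bracket
  have hbk := brk_comp D B N NB K hKfull s hs
      (D.sub N (w1 ≫ D.T.map w2) (w2 ≫ D.T.map w1 ≫ D.c.app M)) hcondf
  have hx9 : ((w1 ≫ D.T.map w2) ≫ psi) ≫ B.q
      = (((w2 ≫ D.T.map w1 ≫ D.c.app M) ≫ N.neg (D.T.obj M)) ≫ psi) ≫ B.q :=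
    hAq.trans (hvneg_q.trans hVq).symm
  have hsum_q : ((w1 ≫ D.T.map w2) ≫ psi) ≫ B.q
      = ((((w2 ≫ D.T.map w1 ≫ D.c.app M) ≫ psi)) ≫ NB.neg) ≫ B.q := by
    have h2 : ((((w2 ≫ D.T.map w1 ≫ D.c.app M) ≫ psi)) ≫ NB.neg) ≫ B.q = 𝟙 M := by
      rw [Category.assoc, NB.neg_q]
      exact hVq
    exact hAq.trans h2.symm
  have hqsub3 : B.qsub NB ((w1 ≫ D.T.map w2) ≫ psi)
        ((w2 ≫ D.T.map w1 ≫ D.c.app M) ≫ psi)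
      = B.E2.pair ((w1 ≫ D.T.map w2) ≫ psi)
          ((((w2 ≫ D.T.map w1 ≫ D.c.app M) ≫ psi)) ≫ NB.neg) hsum_q ≫ B.addq :=
    dif_pos hsum_q
  have hCt : nabla D K (D.lie N w1 w2) s
      = B.qsub NB ((w1 ≫ D.T.map w2) ≫ psi)
          ((w2 ≫ D.T.map w1 ≫ D.c.app M) ≫ psi) := by
    rw [hqsub3]
    calc nabla D K (D.lie N w1 w2) s
        = D.brkT (D.sub N (w1 ≫ D.T.map w2) (w2 ≫ D.T.map w1 ≫ D.c.app M))
            ≫ D.T.map s ≫ K := rfl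
      _ = D.sub N (w1 ≫ D.T.map w2) (w2 ≫ D.T.map w1 ≫ D.c.app M)
            ≫ D.T.map (D.T.map s) ≫ D.T.map K ≫ K := hbk.symm
      _ = D.sub N (w1 ≫ D.T.map w2) (w2 ≫ D.T.map w1 ≫ D.c.app M) ≫ psi := by
          rw [hpsi]
      _ = (D.T2 (D.T.obj M)).pair (w1 ≫ D.T.map w2)
            ((w2 ≫ D.T.map w1 ≫ D.c.app M) ≫ N.neg (D.T.obj M)) hfc
            ≫ D.add (D.T.obj M) ≫ psi := by
          rw [hfeq]
          simp only [Category.assoc]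
      _ = B.E2.pair ((w1 ≫ D.T.map w2) ≫ psi)
            (((w2 ≫ D.T.map w1 ≫ D.c.app M) ≫ N.neg (D.T.obj M)) ≫ psi) hx9
            ≫ B.addq := addpsi _ _ hfc hx9
      _ = B.E2.pair ((w1 ≫ D.T.map w2) ≫ psi)
            ((((w2 ≫ D.T.map w1 ≫ D.c.app M) ≫ psi)) ≫ NB.neg) hsum_q ≫ B.addq :=
          congrArg (· ≫ B.addq) (B.E2.pair_congr rfl negpsi _ _)
  -- assemble everything in the fibre group over `𝟙 M`
  rw [hLHS, hCt, hA]
  let Gq := gbQ B NB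
  let Acl : Gq.Fib (𝟙 M) := ⟨(w1 ≫ D.T.map w2) ≫ psi, hAq⟩
  let Bcl : Gq.Fib (𝟙 M) := ⟨nabla D K w2 (nabla D K w1 s), hBtq⟩
  let Vcl : Gq.Fib (𝟙 M) := ⟨(w2 ≫ D.T.map w1 ≫ D.c.app M) ≫ psi, hVq⟩
  have e1 : B.qsub NB ((w2 ≫ D.T.map w1 ≫ D.c.app M) ≫ psi)
        (nabla D K w2 (nabla D K w1 s)) = (Vcl - Bcl).1 :=
    qsub_val D B NB Vcl Bcl
  have e2 : B.qsub NB ((w1 ≫ D.T.map w2) ≫ psi)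
        (nabla D K w2 (nabla D K w1 s)) = (Acl - Bcl).1 :=
    qsub_val D B NB Acl Bcl
  have e3 : B.qsub NB ((w1 ≫ D.T.map w2) ≫ psi)
        ((w2 ≫ D.T.map w1 ≫ D.c.app M) ≫ psi) = (Acl - Vcl).1 :=
    qsub_val D B NB Acl Vcl
  rw [e1, e2, e3]
  have e4 : B.qsub NB (Acl - Bcl).1 (Acl - Vcl).1 = ((Acl - Bcl) - (Acl - Vcl)).1 :=
    qsub_val D B NB _ _
  rw [e4]
  exact congrArg Subtype.val (by abel : Vcl - Bcl = (Acl - Bcl) - (Acl - Vcl))
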